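/- Each of the five elements x₀, x₁², x₀x₄ + x₁x₃, x₃², x₄² of 𝔽₂[x₀,x₁,x₃,x₄] is invariant: ψ applied to each of them equals its image under the canonical map 𝔽₂[x₀,x₁,x₃,x₄] → E. -/
import Mathlib


open MvPolynomial

noncomputable section

/-- `P = 𝔽₂[x₀, x₁, x₃, x₄]`, with variables indexed `0 ↦ x₀, 1 ↦ x₁, 2 ↦ x₃, 3 ↦ x₄`. -/
abbrev P : Type := MvPolynomial (Fin 4) (ZMod 2)

/-- `P[s, t]`, with `0 ↦ s` and `1 ↦ t`. -/
abbrev PE : Type := MvPolynomial (Fin 2) P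

/-- The ideal `(s², t²)` of `P[s, t]`. -/
def Eid : Ideal PE := Ideal.span ({X 0 ^ 2, X 1 ^ 2} : Set PE)

/-- `E = 𝔽₂[x₀, x₁, x₃, x₄][s, t]/(s², t²)`. -/
abbrev E : Type := PE ⧸ Eid

def sE : E := Ideal.Quotient.mk Eid (X 0)
def tE : E := Ideal.Quotient.mk Eid (X 1)

/-- The canonical map `𝔽₂[x₀, x₁, x₃, x₄] → E`. -/
def ι : P →+* E := (Ideal.Quotient.mk Eid).comp (C : P →+* PE)

def x0 : P := X 0
def x1 : P := X 1
def x3 : P := X 2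
def x4 : P := X 3

/-- The coaction of `O(α₂ × α₂) = 𝔽₂[s, t]/(s², t²)` on `Sym(V)`, `V = 𝔽₂{x₀, x₁, x₃, x₄}`. -/
def ψ : P →+* E :=
  (aeval ![ι x0,
           ι x1 + ι x0 * sE,
           ι x3 + ι x0 * tE,
           ι x4 + ι x3 * sE + ι x1 * tE + ι x0 * sE * tE] : P →ₐ[ZMod 2] E).toRingHom


set_option maxHeartbeats 1000000 in
/-- Each of the five elements `x₀, x₁², x₀x₄ + x₁x₃, x₃², x₄²` of `𝔽₂[x₀, x₁, x₃, x₄]` is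
invariant under the `α₂ × α₂`-coaction `ψ`. -/
theorem generators_invariant :
    ψ x0 = ι x0 ∧
    ψ (x1 ^ 2) = ι (x1 ^ 2) ∧
    ψ (x0 * x4 + x1 * x3) = ι (x0 * x4 + x1 * x3) ∧
    ψ (x3 ^ 2) = ι (x3 ^ 2) ∧
    ψ (x4 ^ 2) = ι (x4 ^ 2) := by
  have hs : sE ^ 2 = 0 := by
    rw [sE, ← map_pow, Ideal.Quotient.eq_zero_iff_mem]
    exact Ideal.subset_span (by left; rfl)
  have ht : tE ^ 2 = 0 := by
    rw [tE, ← map_pow, Ideal.Quotient.eq_zero_iff_mem]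
    exact Ideal.subset_span (by right; rfl)
  have h2 : (2 : E) = 0 := by
    have hp : (2 : P) = 0 := by
      have := CharP.cast_eq_zero P 2
      simpa using this
    calc (2 : E) = ι (2 : P) := by rw [map_ofNat]
    _ = 0 := by rw [hp, map_zero]
  have hψ : ∀ p : P, ψ p = aeval ![ι x0,
           ι x1 + ι x0 * sE,
           ι x3 + ι x0 * tE,
           ι x4 + ι x3 * sE + ι x1 * tE + ι x0 * sE * tE] p := fun _ => rfl
  refine ⟨?_, ?_, ?_, ?_, ?_⟩ <;>
    simp only [hψ, x0, x1, x3, x4, map_pow, map_add, map_mul, aeval_X,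
      Matrix.cons_val_zero, Matrix.cons_val_one, Matrix.head_cons,
      Matrix.cons_val_two, Matrix.cons_val_three, Matrix.tail_cons]
  · linear_combination (ι (X 0))^2 * hs + (ι (X 1) * ι (X 0) * sE) * h2
  · linear_combination (ι (X 0) * ι (X 1) * tE + ι (X 0) * ι (X 2) * sE
      + ι (X 0)^2 * sE * tE) * h2
  · linear_combination (ι (X 0))^2 * ht + (ι (X 2) * ι (X 0) * tE) * h2
  · linear_combination ((ι (X 2))^2 + (ι (X 0))^2 * tE^2) * hs + (ι (X 1))^2 * ht
      + (ι (X 3) * ι (X 2) * sE + ι (X 3) * ι (X 1) * tE + ι (X 3) * ι (X 0) * sE * tE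
        + ι (X 2) * ι (X 1) * sE * tE + ι (X 2) * ι (X 0) * sE^2 * tE
        + ι (X 1) * ι (X 0) * sE * tE^2) * h2
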